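/- Let f: [0,∞) → [0,∞] have d-rapid decay, Λ ⊂ ℝ^d a lattice, and C = ∪_{i=1}^N (x_i + Λ) an N-point Λ-periodic configuration with representatives ω_N = {x_1,…,x_N}. Then the average energy E_f(C) := lim_{r→∞} E_f(C ∩ B(0,r))/|C ∩ B(0,r)| exists and equals (1/N)(E_{F_{f,Λ}}(ω_N) + N ∑_{0≠v∈Λ} f(|v|²)), where F_{f,Λ}(x) = ∑_{v∈Λ} f(|x+v|²) and E_F(ω_N) = ∑_{i≠j} F(x_i - x_j). -/

import Mathlib

open Submodule Filter MeasureTheory Bornology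
open scoped ENNReal

section aux
variable {d : ℕ} (b : Module.Basis (Fin d) ℝ (EuclideanSpace ℝ (Fin d)))

local notation "V" => EuclideanSpace ℝ (Fin d)

noncomputable abbrev zlat : AddSubgroup (EuclideanSpace ℝ (Fin d)) :=
  (span ℤ (Set.range ⇑b)).toAddSubgroup

lemma lat_finite (r : ℝ) : {v : V | v ∈ zlat b ∧ ‖v‖ < r}.Finite := by
  have hcl : IsClosed ((zlat b : AddSubgroup V) : Set V) := AddSubgroup.isClosed_of_discrete
  have h1 : IsCompact (((zlat b : AddSubgroup V) : Set V) ∩ Metric.closedBall 0 r) :=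
    (isCompact_closedBall (0:V) r).inter_left hcl
  have h2 : DiscreteTopology (((zlat b : AddSubgroup V) : Set V) ∩ Metric.closedBall 0 r :
      Set V) := by
    have : DiscreteTopology ((zlat b : AddSubgroup V) : Set V) :=
      (inferInstance : DiscreteTopology (zlat b))
    exact this.of_subset Set.inter_subset_left
  have h3 := h1.finite (isDiscrete_iff_discreteTopology.2 h2)
  refine h3.subset fun v hv => ?_
  exact ⟨hv.1, Metric.mem_closedBall.2 (by simpa [dist_eq_norm] using hv.2.le)⟩

lemma sub_finite (r : ℝ) : Finite {v : zlat b // ‖(v : V)‖ < r} := by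
  haveI := (lat_finite b r).to_subtype
  refine Finite.of_injective (fun v => (⟨(v : V), (v:zlat b).2, v.2⟩ :
    {v : V | v ∈ zlat b ∧ ‖v‖ < r})) ?_
  intro u v huv
  simp only [Subtype.mk.injEq] at huv
  exact Subtype.ext (Subtype.ext huv)

noncomputable def zcnt (r : ℝ) : ℕ := Nat.card {v : zlat b // ‖(v : V)‖ < r}

lemma cnt_eq_card (r : ℝ) : zcnt b r = (lat_finite b r).toFinset.card := by
  rw [zcnt, ← Set.ncard_eq_toFinset_card _ (lat_finite b r)]
  rw [← Nat.card_coe_set_eq]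
  exact Nat.card_eq_of_bijective (fun v => ⟨(v : V), (v : zlat b).2, v.2⟩)
    ⟨fun u v huv => by
      simp only [Subtype.mk.injEq] at huv
      exact Subtype.ext (Subtype.ext huv),
     fun w => ⟨⟨⟨w.1, w.2.1⟩, w.2.2⟩, rfl⟩⟩
end aux

section aux2
variable {d : ℕ} (b : Module.Basis (Fin d) ℝ (EuclideanSpace ℝ (Fin d)))
local notation "V" => EuclideanSpace ℝ (Fin d)
open scoped Pointwise

lemma zcnt_sandwich (ρ : ℝ) (hρ0 : 0 ≤ ρ)
    (hρ : ZSpan.fundamentalDomain b ⊆ Metric.closedBall 0 ρ) (r : ℝ) :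
    volume (Metric.ball (0:V) (r - ρ)) ≤
      (zcnt b r : ℝ≥0∞) * volume (ZSpan.fundamentalDomain b) ∧
    (zcnt b r : ℝ≥0∞) * volume (ZSpan.fundamentalDomain b) ≤
      volume (Metric.ball (0:V) (r + ρ)) := by
  classical
  set D := ZSpan.fundamentalDomain b with hD
  have hDm : MeasurableSet D := ZSpan.fundamentalDomain_measurableSet b
  set Fs := (lat_finite b r).toFinset with hFs
  have hmem : ∀ v ∈ Fs, v ∈ zlat b ∧ ‖v‖ < r := by
    intro v hv
    rw [hFs, Set.Finite.mem_toFinset] at hv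
    exact hv
  have hcard : (Fs.card : ℝ≥0∞) = (zcnt b r : ℝ≥0∞) := by
    rw [cnt_eq_card]
  -- each point of V lies in exactly one translate
  have huniq : ∀ z : V, ∃! u : span ℤ (Set.range ⇑b), (u : V) + z ∈ D :=
    fun z => ZSpan.exist_unique_vadd_mem_fundamentalDomain b z
  constructor
  · -- covering
    have hcov : Metric.ball (0:V) (r - ρ) ⊆ ⋃ v ∈ Fs, (v +ᵥ D) := by
      intro z hz
      rw [Metric.mem_ball, dist_zero_right] at hz
      obtain ⟨u, hu, -⟩ := huniq z
      have huD : (u : V) + z ∈ D := hu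
      have hnorm : ‖(-(u : V))‖ < r := by
        have h1 : ‖(u : V) + z‖ ≤ ρ := by
          simpa [dist_zero_right] using Metric.mem_closedBall.1 (hρ huD)
        calc ‖(-(u : V))‖ = ‖((u : V) + z) + (-z)‖ := by
              rw [add_neg_cancel_right, norm_neg]
          _ ≤ ‖(u : V) + z‖ + ‖z‖ := by
              simpa using norm_add_le ((u : V) + z) (-z)
          _ < ρ + (r - ρ) := by exact add_lt_add_of_le_of_lt h1 hz
          _ = r := by ring
      have hmemF : (-(u : V)) ∈ Fs := by
        rw [hFs, Set.Finite.mem_toFinset]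
        exact ⟨neg_mem u.2, hnorm⟩
      refine Set.mem_biUnion hmemF ?_
      rw [Set.mem_vadd_set_iff_neg_vadd_mem]
      simpa [add_comm] using huD
    calc volume (Metric.ball (0:V) (r - ρ)) ≤ volume (⋃ v ∈ Fs, (v +ᵥ D)) :=
          measure_mono hcov
      _ ≤ ∑ v ∈ Fs, volume (v +ᵥ D) := measure_biUnion_finset_le Fs _
      _ = ∑ v ∈ Fs, volume D := by
          refine Finset.sum_congr rfl fun v hv => measure_vadd (μ := volume) v D
      _ = (Fs.card : ℝ≥0∞) * volume D := by
          rw [Finset.sum_const, nsmul_eq_mul]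
      _ = (zcnt b r : ℝ≥0∞) * volume D := by rw [hcard]
  · -- packing
    have hdisj : (↑Fs : Set V).PairwiseDisjoint (fun v => v +ᵥ D) := by
      intro u hu v hv huv
      simp only [Function.onFun]
      rw [Set.disjoint_left]
      intro z hzu hzv
      rw [Set.mem_vadd_set_iff_neg_vadd_mem] at hzu hzv
      have hu' : u ∈ zlat b := (hmem u (by exact_mod_cast hu)).1
      have hv' : v ∈ zlat b := (hmem v (by exact_mod_cast hv)).1
      obtain ⟨w, -, hwu⟩ := huniq z
      have e1 : (⟨-u, neg_mem hu'⟩ : span ℤ (Set.range ⇑b)) = w := hwu _ (by simpa using hzu)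
      have e2 : (⟨-v, neg_mem hv'⟩ : span ℤ (Set.range ⇑b)) = w := hwu _ (by simpa using hzv)
      apply huv
      have := e1.trans e2.symm
      have : (-u : V) = -v := congrArg Subtype.val this
      simpa using this
    have hsub : (⋃ v ∈ Fs, (v +ᵥ D)) ⊆ Metric.ball (0:V) (r + ρ) := by
      intro z hz
      rw [Set.mem_iUnion₂] at hz
      obtain ⟨v, hv, hzv⟩ := hz
      rw [Set.mem_vadd_set_iff_neg_vadd_mem] at hzv
      have h1 : ‖-v + z‖ ≤ ρ := by
        simpa [dist_zero_right] using Metric.mem_closedBall.1 (hρ hzv)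
      have h2 : ‖v‖ < r := (hmem v hv).2
      rw [Metric.mem_ball, dist_zero_right]
      calc ‖z‖ = ‖v + (-v + z)‖ := by rw [add_neg_cancel_left]
        _ ≤ ‖v‖ + ‖-v + z‖ := norm_add_le _ _
        _ < r + ρ := add_lt_add_of_lt_of_le h2 h1
    calc (zcnt b r : ℝ≥0∞) * volume D = (Fs.card : ℝ≥0∞) * volume D := by rw [hcard]
      _ = ∑ v ∈ Fs, volume D := by rw [Finset.sum_const, nsmul_eq_mul]
      _ = ∑ v ∈ Fs, volume (v +ᵥ D) := by
          refine Finset.sum_congr rfl fun v hv => (measure_vadd (μ := volume) v D).symm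
      _ = volume (⋃ v ∈ Fs, (v +ᵥ D)) :=
          (measure_biUnion_finset hdisj fun v hv => hDm.const_vadd v).symm
      _ ≤ volume (Metric.ball (0:V) (r + ρ)) := measure_mono hsub
end aux2

section aux3
variable {d : ℕ} (b : Module.Basis (Fin d) ℝ (EuclideanSpace ℝ (Fin d)))
local notation "V" => EuclideanSpace ℝ (Fin d)

lemma zcnt_pos : ∀ᶠ r : ℝ in Filter.atTop, 1 ≤ zcnt b r := by
  filter_upwards [eventually_gt_atTop 0] with r hr
  haveI := sub_finite b r
  haveI : Nonempty {v : zlat b // ‖(v : V)‖ < r} := ⟨⟨0, by simpa using hr⟩⟩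
  exact Nat.one_le_iff_ne_zero.2 (Nat.card_ne_zero.2 ⟨‹_›, ‹_›⟩)

lemma zcnt_growth (a : ℝ) (ha : 0 ≤ a) {δ : ℝ} (hδ : 1 < δ) :
    ∀ᶠ r : ℝ in Filter.atTop,
      (zcnt b (r + a) : ℝ≥0∞) ≤ ENNReal.ofReal δ * (zcnt b r : ℝ≥0∞) := by
  obtain ⟨ρ₀, hρ₀⟩ := (ZSpan.fundamentalDomain_isBounded (b := b)).subset_closedBall 0
  set ρ := max ρ₀ 0 with hρdef
  have hρ0 : 0 ≤ ρ := le_max_right _ _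
  have hρ : ZSpan.fundamentalDomain b ⊆ Metric.closedBall 0 ρ :=
    hρ₀.trans (Metric.closedBall_subset_closedBall (le_max_left _ _))
  set ν := volume (ZSpan.fundamentalDomain b) with hν
  have hν0 : ν ≠ 0 := ZSpan.measure_fundamentalDomain_ne_zero b
  have hνtop : ν ≠ ⊤ :=
    ((ZSpan.fundamentalDomain_isBounded (b := b)).measure_lt_top).ne
  have hrank : Module.finrank ℝ V = d := finrank_euclideanSpace_fin
  -- real asymptotics
  have hlim : Filter.Tendsto (fun r : ℝ => (r + (a + ρ)) / (r - ρ))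
      Filter.atTop (nhds 1) := by
    have h1 : Filter.Tendsto (fun r : ℝ => 1 + (a + ρ + ρ) * (r - ρ)⁻¹)
        Filter.atTop (nhds 1) := by
      have := ((tendsto_inv_atTop_zero).comp
        (Filter.tendsto_atTop_add_const_right Filter.atTop (-ρ) Filter.tendsto_id)).const_mul
        (a + ρ + ρ)
      simpa [sub_eq_add_neg] using (tendsto_const_nhds.add this)
    refine h1.congr' ?_
    filter_upwards [eventually_gt_atTop ρ] with r hr
    have hr0 : r - ρ ≠ 0 := ne_of_gt (by linarith)
    field_simp
    ring

  have hev : ∀ᶠ r : ℝ in Filter.atTop,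
      (r + (a + ρ)) ^ d ≤ δ * (r - ρ) ^ d := by
    have h2 : Filter.Tendsto (fun r : ℝ => ((r + (a + ρ)) / (r - ρ)) ^ d)
        Filter.atTop (nhds 1) := by
      simpa using hlim.pow d
    filter_upwards [h2.eventually_lt_const hδ, eventually_gt_atTop ρ] with r h3 h4
    have hrρ : (0:ℝ) < r - ρ := by linarith
    have hpos : (0:ℝ) < (r - ρ) ^ d := by positivity
    rw [div_pow, div_lt_iff₀ hpos] at h3
    exact h3.le
  filter_upwards [hev, eventually_gt_atTop ρ] with r h1 h2
  have hs1 := (zcnt_sandwich b ρ hρ0 hρ r).1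
  have hs2 := (zcnt_sandwich b ρ hρ0 hρ (r + a)).2
  have hball1 : volume (Metric.ball (0:V) (r + a + ρ)) =
      ENNReal.ofReal ((r + (a + ρ)) ^ d) * volume (Metric.ball (0:V) 1) := by
    rw [show r + a + ρ = r + (a + ρ) by ring,
      MeasureTheory.Measure.addHaar_ball_of_pos volume (0:V)
        (show (0:ℝ) < r + (a + ρ) by linarith), hrank]
  have hball2 : volume (Metric.ball (0:V) (r - ρ)) =
      ENNReal.ofReal ((r - ρ) ^ d) * volume (Metric.ball (0:V) 1) := by
    rw [MeasureTheory.Measure.addHaar_ball_of_pos volume (0:V)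
      (show (0:ℝ) < r - ρ by linarith), hrank]
  have key : (zcnt b (r + a) : ℝ≥0∞) * ν ≤ (ENNReal.ofReal δ * zcnt b r) * ν := by
    calc (zcnt b (r + a) : ℝ≥0∞) * ν ≤ volume (Metric.ball (0:V) (r + a + ρ)) := hs2
      _ = ENNReal.ofReal ((r + (a + ρ)) ^ d) * volume (Metric.ball (0:V) 1) := hball1
      _ ≤ ENNReal.ofReal (δ * (r - ρ) ^ d) * volume (Metric.ball (0:V) 1) := by
          exact mul_le_mul_left (ENNReal.ofReal_le_ofReal h1) _
      _ = ENNReal.ofReal δ * (ENNReal.ofReal ((r - ρ) ^ d) *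
          volume (Metric.ball (0:V) 1)) := by
          rw [ENNReal.ofReal_mul (by linarith), mul_assoc]
      _ = ENNReal.ofReal δ * volume (Metric.ball (0:V) (r - ρ)) := by rw [hball2]
      _ ≤ ENNReal.ofReal δ * ((zcnt b r : ℝ≥0∞) * ν) := mul_le_mul_right hs1 _
      _ = (ENNReal.ofReal δ * zcnt b r) * ν := by rw [mul_assoc]
  exact (ENNReal.mul_le_mul_iff_left hν0 hνtop).1 key
end aux3

lemma ennreal_exists_mul_le {β γ : ℝ≥0∞} (h : β < γ) : ∃ δ : ℝ, 1 < δ ∧ β * ENNReal.ofReal δ ≤ γ := by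
  rcases eq_or_ne β 0 with hβ | hβ
  · exact ⟨2, one_lt_two, by simp [hβ]⟩
  · have hβt : β ≠ ⊤ := h.ne_top
    obtain ⟨m, hm1, hm2⟩ := exists_between h
    have hmt : m ≠ ⊤ := hm2.ne_top
    have hdiv1 : 1 < m / β := by
      rw [ENNReal.lt_div_iff_mul_lt (Or.inl hβ) (Or.inl hβt), one_mul]
      exact hm1
    have hdivt : m / β ≠ ⊤ := (ENNReal.div_lt_top hmt hβ).ne
    refine ⟨(m / β).toReal, ?_, ?_⟩
    · rw [← ENNReal.toReal_one]
      exact ENNReal.toReal_strict_mono hdivt hdiv1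
    · rw [ENNReal.ofReal_toReal hdivt, ENNReal.mul_div_cancel hβ hβt]
      exact hm2.le

open Filter in
set_option maxHeartbeats 2000000 in
theorem stmt_18 (d N : ℕ) (hN : 0 < N)
    (f : ℝ → ℝ≥0∞)
    (hf : ∃ s > (d : ℝ), ∃ C : ℝ, ∀ r ≥ (1 : ℝ), f (r ^ 2) ≤ ENNReal.ofReal (C * r ^ (-s)))
    (b : Module.Basis (Fin d) ℝ (EuclideanSpace ℝ (Fin d)))
    (Λ : AddSubgroup (EuclideanSpace ℝ (Fin d)))
    (hΛ : Λ = AddSubgroup.closure (Set.range ⇑b))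
    (x : Fin N → EuclideanSpace ℝ (Fin d))
    (F : EuclideanSpace ℝ (Fin d) → ℝ≥0∞)
    (hF : ∀ y, F y = ∑' w : Λ, f (‖y + (w : EuclideanSpace ℝ (Fin d))‖ ^ 2))
    (E : ℝ → ℝ≥0∞)
    (hE : ∀ r : ℝ, E r = ∑' p : {q : (Fin N × Λ) × (Fin N × Λ) // q.1 ≠ q.2 ∧
          ‖x q.1.1 + (q.1.2 : EuclideanSpace ℝ (Fin d))‖ < r ∧
          ‖x q.2.1 + (q.2.2 : EuclideanSpace ℝ (Fin d))‖ < r},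
        f (‖(x (p : (Fin N × Λ) × (Fin N × Λ)).1.1 +
              ((p : (Fin N × Λ) × (Fin N × Λ)).1.2 : EuclideanSpace ℝ (Fin d))) -
            (x (p : (Fin N × Λ) × (Fin N × Λ)).2.1 +
              ((p : (Fin N × Λ) × (Fin N × Λ)).2.2 : EuclideanSpace ℝ (Fin d)))‖ ^ 2))
    (card : ℝ → ℕ)
    (hcard : ∀ r : ℝ, card r =
      Nat.card {q : Fin N × Λ // ‖x q.1 + (q.2 : EuclideanSpace ℝ (Fin d))‖ < r}) :
    Filter.Tendsto (fun r : ℝ => E r / (card r : ℝ≥0∞)) Filter.atTop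
      (nhds (((∑ i, ∑ j, if i ≠ j then F (x i - x j) else 0) +
          (N : ℝ≥0∞) * ∑' v : {w : Λ // w ≠ 0},
            f (‖((v : Λ) : EuclideanSpace ℝ (Fin d))‖ ^ 2)) / (N : ℝ≥0∞))) := by
  classical
  have hL : Λ = zlat b := by
    rw [hΛ]; exact (Submodule.span_int_eq_addSubgroupClosure _).symm
  subst hL
  clear hf hΛ
  set G : Fin N → ℝ≥0∞ := fun i => ∑' q : Fin N × zlat b,
    if q = (i, 0) then 0
    else f (‖x i - (x q.1 + (q.2 : EuclideanSpace ℝ (Fin d)))‖ ^ 2) with hG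
  set SG := ∑ i, G i with hSG
  have hNn0 : (N : ℝ≥0∞) ≠ 0 := by exact_mod_cast hN.ne'
  have hNnt : (N : ℝ≥0∞) ≠ ⊤ := ENNReal.natCast_ne_top N
  have hnum : (∑ i, ∑ j, if i ≠ j then F (x i - x j) else 0) +
      (N : ℝ≥0∞) * ∑' v : {w : zlat b // w ≠ 0},
        f (‖((v : zlat b) : EuclideanSpace ℝ (Fin d))‖ ^ 2) = SG := by
    set Sv := ∑' v : {w : zlat b // w ≠ 0},
      f (‖((v : zlat b) : EuclideanSpace ℝ (Fin d))‖ ^ 2) with hSv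
    have hGi : ∀ i, G i = ∑ j, if j = i then Sv else F (x i - x j) := by
      intro i
      rw [hG]
      dsimp only
      rw [ENNReal.tsum_prod (f := fun j w => if (j, w) = (i, (0 : zlat b)) then 0
        else f (‖x i - (x j + (w : EuclideanSpace ℝ (Fin d)))‖ ^ 2))]
      rw [tsum_fintype]
      refine Finset.sum_congr rfl fun j _ => ?_
      by_cases hij : j = i
      · subst hij
        rw [if_pos rfl]
        calc ∑' w : zlat b, (if (j, w) = (j, (0 : zlat b)) then 0
              else f (‖x j - (x j + (w : EuclideanSpace ℝ (Fin d)))‖ ^ 2))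
            = ∑' w : zlat b, (if w = 0 then 0
              else f (‖(w : EuclideanSpace ℝ (Fin d))‖ ^ 2)) := by
              refine tsum_congr fun w => ?_
              by_cases hw : w = 0
              · simp [hw]
              · rw [if_neg (by simp [hw]), if_neg hw]
                congr 2
                rw [show x j - (x j + (w : EuclideanSpace ℝ (Fin d)))
                  = -(w : EuclideanSpace ℝ (Fin d)) by abel, norm_neg]
          _ = ∑' w : zlat b, Set.indicator {w : zlat b | w ≠ 0}
                (fun w => f (‖(w : EuclideanSpace ℝ (Fin d))‖ ^ 2)) w := by
              refine tsum_congr fun w => ?_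
              by_cases hw : w = 0 <;> simp [Set.indicator_apply, hw]
          _ = Sv := by
              rw [hSv]
              exact (tsum_subtype {w : zlat b | w ≠ 0}
                (fun w => f (‖(w : EuclideanSpace ℝ (Fin d))‖ ^ 2))).symm
      · rw [if_neg hij, hF]
        have h1 : ∀ w : zlat b,
            (if (j, w) = (i, (0 : zlat b)) then 0
              else f (‖x i - (x j + (w : EuclideanSpace ℝ (Fin d)))‖ ^ 2)) =
            f (‖(x i - x j) + (((Equiv.neg (zlat b)) w : zlat b) :
              EuclideanSpace ℝ (Fin d))‖ ^ 2) := by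
          intro w
          rw [if_neg (by simp [hij])]
          congr 2
          simp only [Equiv.neg_apply]
          rw [show ((-w : zlat b) : EuclideanSpace ℝ (Fin d))
            = -(w : EuclideanSpace ℝ (Fin d)) from rfl]
          abel
        calc (∑' w : zlat b, if (j, w) = (i, (0 : zlat b)) then 0
              else f (‖x i - (x j + (w : EuclideanSpace ℝ (Fin d)))‖ ^ 2))
            = ∑' w : zlat b, f (‖(x i - x j) + (((Equiv.neg (zlat b)) w : zlat b) :
                EuclideanSpace ℝ (Fin d))‖ ^ 2) := tsum_congr h1
          _ = ∑' w : zlat b, f (‖(x i - x j) +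
                (w : EuclideanSpace ℝ (Fin d))‖ ^ 2) :=
              (Equiv.neg (zlat b)).tsum_eq
                (fun w => f (‖(x i - x j) + (w : EuclideanSpace ℝ (Fin d))‖ ^ 2))
    have hsplit : ∀ i, (∑ j, if j = i then Sv else F (x i - x j)) =
        Sv + ∑ j, (if i ≠ j then F (x i - x j) else 0) := by
      intro i
      have : ∀ j : Fin N, (if j = i then Sv else F (x i - x j)) =
          (if j = i then Sv else 0) + (if i ≠ j then F (x i - x j) else 0) := by
        intro j
        by_cases hij : j = i
        · simp [hij]
        · simp [hij, Ne.symm hij]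
      rw [Finset.sum_congr rfl fun j _ => this j, Finset.sum_add_distrib,
        Finset.sum_ite_eq' Finset.univ i (fun _ => Sv), if_pos (Finset.mem_univ i)]
    rw [hSG, Finset.sum_congr rfl fun i _ => (hGi i).trans (hsplit i),
      Finset.sum_add_distrib, Finset.sum_const, Finset.card_univ, Fintype.card_fin,
      nsmul_eq_mul, add_comm]
  rw [hnum]
  -- representative bound
  set A := ∑ i, ‖x i‖ with hAdef
  have hA0 : 0 ≤ A := Finset.sum_nonneg fun i _ => norm_nonneg _
  have hA : ∀ i, ‖x i‖ ≤ A := fun i =>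
    Finset.single_le_sum (f := fun j => ‖x j‖) (fun j _ => norm_nonneg (x j))
      (Finset.mem_univ i)
  have hfinq : ∀ r : ℝ, Finite {q : Fin N × zlat b //
      ‖x q.1 + (q.2 : EuclideanSpace ℝ (Fin d))‖ < r} := by
    intro r
    haveI := sub_finite b (r + A)
    refine Finite.of_injective (fun q => ((q : Fin N × zlat b).1,
      (⟨(q : Fin N × zlat b).2, ?_⟩ : {v : zlat b //
        ‖(v : EuclideanSpace ℝ (Fin d))‖ < r + A}))) ?_
    · have h1 := q.2
      calc ‖((q : Fin N × zlat b).2 : EuclideanSpace ℝ (Fin d))‖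
          = ‖(x (q : Fin N × zlat b).1 + (q : Fin N × zlat b).2) -
              x (q : Fin N × zlat b).1‖ := by rw [add_sub_cancel_left]
        _ ≤ ‖x (q : Fin N × zlat b).1 + (q : Fin N × zlat b).2‖ +
            ‖x (q : Fin N × zlat b).1‖ := norm_sub_le _ _
        _ < r + A := add_lt_add_of_lt_of_le h1 (hA _)
    · intro u v huv
      simp only [Prod.mk.injEq, Subtype.mk.injEq] at huv
      exact Subtype.ext (Prod.ext huv.1 huv.2)
  have hchigh : ∀ r : ℝ, card r ≤ N * zcnt b (r + A) := by
    intro r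
    haveI := sub_finite b (r + A)
    haveI : Finite (Fin N × {v : zlat b // ‖(v : EuclideanSpace ℝ (Fin d))‖ < r + A}) :=
      inferInstance
    rw [hcard r, show N * zcnt b (r + A)
      = Nat.card (Fin N × {v : zlat b // ‖(v : EuclideanSpace ℝ (Fin d))‖ < r + A}) by
        rw [Nat.card_prod, Nat.card_eq_fintype_card, Fintype.card_fin]; rfl]
    refine Nat.card_le_card_of_injective (fun q => ((q : Fin N × zlat b).1,
      ⟨(q : Fin N × zlat b).2, ?_⟩)) ?_
    · calc ‖((q : Fin N × zlat b).2 : EuclideanSpace ℝ (Fin d))‖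
          = ‖(x (q : Fin N × zlat b).1 + (q : Fin N × zlat b).2) -
              x (q : Fin N × zlat b).1‖ := by rw [add_sub_cancel_left]
        _ ≤ ‖x (q : Fin N × zlat b).1 + (q : Fin N × zlat b).2‖ +
            ‖x (q : Fin N × zlat b).1‖ := norm_sub_le _ _
        _ < r + A := add_lt_add_of_lt_of_le q.2 (hA _)
    · intro u v huv
      simp only [Prod.mk.injEq, Subtype.mk.injEq] at huv
      exact Subtype.ext (Prod.ext huv.1 huv.2)
  have hclow : ∀ r : ℝ, N * zcnt b (r - A) ≤ card r := by
    intro r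
    haveI := hfinq r
    rw [hcard r, show N * zcnt b (r - A)
      = Nat.card (Fin N × {v : zlat b // ‖(v : EuclideanSpace ℝ (Fin d))‖ < r - A}) by
        rw [Nat.card_prod, Nat.card_eq_fintype_card, Fintype.card_fin]; rfl]
    refine Nat.card_le_card_of_injective (fun z => ⟨(z.1, (z.2 : zlat b)), ?_⟩) ?_
    · calc ‖x z.1 + ((z.2 : zlat b) : EuclideanSpace ℝ (Fin d))‖
          ≤ ‖x z.1‖ + ‖((z.2 : zlat b) : EuclideanSpace ℝ (Fin d))‖ := norm_add_le _ _
        _ < A + (r - A) := add_lt_add_of_le_of_lt (hA _) z.2.2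
        _ = r := by ring
    · intro u v huv
      simp only [Subtype.mk.injEq, Prod.mk.injEq] at huv
      exact Prod.ext huv.1 (Subtype.ext huv.2)
  have hub : ∀ r : ℝ, E r ≤ (zcnt b (r + A) : ℝ≥0∞) * SG := by
    intro r
    rw [hE r]
    set Br := {q : Fin N × zlat b //
      ‖x q.1 + (q.2 : EuclideanSpace ℝ (Fin d))‖ < r} with hBr
    set g : Br × (Fin N × zlat b) → ℝ≥0∞ := fun z =>
      if z.2 = ((z.1 : Fin N × zlat b).1, 0) then 0
      else f (‖x (z.1 : Fin N × zlat b).1 -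
        (x z.2.1 + (z.2.2 : EuclideanSpace ℝ (Fin d)))‖ ^ 2) with hg
    set ι : {q : (Fin N × zlat b) × (Fin N × zlat b) // q.1 ≠ q.2 ∧
        ‖x q.1.1 + (q.1.2 : EuclideanSpace ℝ (Fin d))‖ < r ∧
        ‖x q.2.1 + (q.2.2 : EuclideanSpace ℝ (Fin d))‖ < r} → Br × (Fin N × zlat b) :=
      fun p => ((⟨(p : (Fin N × zlat b) × (Fin N × zlat b)).1, p.2.2.1⟩ : Br),
        ((p : (Fin N × zlat b) × (Fin N × zlat b)).2.1,
         (p : (Fin N × zlat b) × (Fin N × zlat b)).2.2 -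
         (p : (Fin N × zlat b) × (Fin N × zlat b)).1.2)) with hι
    have hval : ∀ p : {q : (Fin N × zlat b) × (Fin N × zlat b) // q.1 ≠ q.2 ∧
        ‖x q.1.1 + (q.1.2 : EuclideanSpace ℝ (Fin d))‖ < r ∧
        ‖x q.2.1 + (q.2.2 : EuclideanSpace ℝ (Fin d))‖ < r},
        f (‖(x (p : (Fin N × zlat b) × (Fin N × zlat b)).1.1 +
              ((p : (Fin N × zlat b) × (Fin N × zlat b)).1.2 : EuclideanSpace ℝ (Fin d))) -
            (x (p : (Fin N × zlat b) × (Fin N × zlat b)).2.1 +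
              ((p : (Fin N × zlat b) × (Fin N × zlat b)).2.2 :
                EuclideanSpace ℝ (Fin d)))‖ ^ 2) = g (ι p) := by
      intro p
      obtain ⟨⟨q1, q2⟩, hne, h1, h2⟩ := p
      rw [hι, hg]
      dsimp only
      rw [if_neg ?_]
      · congr 2
        rw [show ((q2.2 - q1.2 : zlat b) : EuclideanSpace ℝ (Fin d))
          = (q2.2 : EuclideanSpace ℝ (Fin d)) - (q1.2 : EuclideanSpace ℝ (Fin d)) from rfl]
        abel
      · intro hc
        rw [Prod.mk.injEq] at hc
        exact hne (Prod.ext hc.1.symm (sub_eq_zero.1 hc.2).symm)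
    have hinj : Function.Injective ι := by
      intro p p' hpp
      rw [hι] at hpp
      simp only [Prod.mk.injEq, Subtype.mk.injEq] at hpp
      obtain ⟨h1, h2, h3⟩ := hpp
      have e1 : (p : (Fin N × zlat b) × (Fin N × zlat b)).1
          = (p' : (Fin N × zlat b) × (Fin N × zlat b)).1 := congrArg Subtype.val h1
      have e2 : (p : (Fin N × zlat b) × (Fin N × zlat b)).1.2
          = (p' : (Fin N × zlat b) × (Fin N × zlat b)).1.2 := by rw [e1]
      have e3 : (p : (Fin N × zlat b) × (Fin N × zlat b)).2.2
          = (p' : (Fin N × zlat b) × (Fin N × zlat b)).2.2 := by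
        have h3' := h3
        rw [e2] at h3'
        exact sub_left_inj.1 h3'
      exact Subtype.ext (Prod.ext e1 (Prod.ext h2 e3))
    calc (∑' p : {q : (Fin N × zlat b) × (Fin N × zlat b) // q.1 ≠ q.2 ∧
        ‖x q.1.1 + (q.1.2 : EuclideanSpace ℝ (Fin d))‖ < r ∧
        ‖x q.2.1 + (q.2.2 : EuclideanSpace ℝ (Fin d))‖ < r},
        f (‖(x (p : (Fin N × zlat b) × (Fin N × zlat b)).1.1 +
              ((p : (Fin N × zlat b) × (Fin N × zlat b)).1.2 : EuclideanSpace ℝ (Fin d))) -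
            (x (p : (Fin N × zlat b) × (Fin N × zlat b)).2.1 +
              ((p : (Fin N × zlat b) × (Fin N × zlat b)).2.2 :
                EuclideanSpace ℝ (Fin d)))‖ ^ 2))
        = ∑' p, g (ι p) := tsum_congr hval
      _ ≤ ∑' z : Br × (Fin N × zlat b), g z :=
          ENNReal.tsum_comp_le_tsum_of_injective hinj g
      _ = ∑' s : Br, G (s : Fin N × zlat b).1 := by
          rw [ENNReal.tsum_prod (f := fun s q => g (s, q))]
      _ ≤ ∑' z : {v : zlat b // ‖(v : EuclideanSpace ℝ (Fin d))‖ < r + A} × Fin N,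
            G z.2 := by
          refine le_trans (le_of_eq ?_)
            (ENNReal.tsum_comp_le_tsum_of_injective (f := fun s : Br =>
              ((⟨(s : Fin N × zlat b).2, ?_⟩ :
                {v : zlat b // ‖(v : EuclideanSpace ℝ (Fin d))‖ < r + A}),
               (s : Fin N × zlat b).1)) ?_ (fun z => G z.2))
          · rfl
          · calc ‖((s : Fin N × zlat b).2 : EuclideanSpace ℝ (Fin d))‖
                = ‖(x (s : Fin N × zlat b).1 + (s : Fin N × zlat b).2) -
                    x (s : Fin N × zlat b).1‖ := by rw [add_sub_cancel_left]
              _ ≤ ‖x (s : Fin N × zlat b).1 + (s : Fin N × zlat b).2‖ +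
                  ‖x (s : Fin N × zlat b).1‖ := norm_sub_le _ _
              _ < r + A := add_lt_add_of_lt_of_le s.2 (hA _)
          · intro u v huv
            simp only [Prod.mk.injEq, Subtype.mk.injEq] at huv
            exact Subtype.ext (Prod.ext huv.2 huv.1)
      _ = (zcnt b (r + A) : ℝ≥0∞) * SG := by
          haveI := sub_finite b (r + A)
          letI : Fintype {v : zlat b // ‖(v : EuclideanSpace ℝ (Fin d))‖ < r + A} :=
            Fintype.ofFinite _
          rw [ENNReal.tsum_prod (f := fun v i => G i)]
          rw [tsum_fintype]
          simp only [tsum_fintype]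
          rw [Finset.sum_const, Finset.card_univ, nsmul_eq_mul]
          congr 1
          rw [zcnt, Nat.card_eq_fintype_card]
  have hlb : ∀ (Q : Finset (Fin N × zlat b)) (T : ℝ), 0 ≤ T →
      (∀ i, ∀ q ∈ Q, ‖x i - (x q.1 + (q.2 : EuclideanSpace ℝ (Fin d)))‖ < T) →
      ∀ r : ℝ, (zcnt b (r - T - A) : ℝ≥0∞) *
        (∑ i, ∑ q ∈ Q, if q = (i, 0) then 0
          else f (‖x i - (x q.1 + (q.2 : EuclideanSpace ℝ (Fin d)))‖ ^ 2)) ≤ E r := by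
    intro Q T hT0 hQT r
    rw [hE r]
    haveI := sub_finite b (r - T - A)
    set Cs := {v : zlat b // ‖(v : EuclideanSpace ℝ (Fin d))‖ < r - T - A} with hCs
    set Y := (Fin N × Cs) × {q : Fin N × zlat b // q ∈ Q} with hY
    set h2 : Y → ℝ≥0∞ := fun z => if (z.2 : Fin N × zlat b) = (z.1.1, 0) then 0
      else f (‖x z.1.1 - (x (z.2 : Fin N × zlat b).1 +
        ((z.2 : Fin N × zlat b).2 : EuclideanSpace ℝ (Fin d)))‖ ^ 2) with hh2
    set S := {z : Y | (z.2 : Fin N × zlat b) ≠ (z.1.1, 0)} with hS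
    -- the injection into the index set of E r
    have hmap : ∀ z : S, ((z : Y).1.1, ((z : Y).1.2 : zlat b)) ≠
        ((((z : Y).2 : Fin N × zlat b)).1,
          (((z : Y).2 : Fin N × zlat b)).2 + ((z : Y).1.2 : zlat b)) ∧
        ‖x (z : Y).1.1 + (((z : Y).1.2 : zlat b) : EuclideanSpace ℝ (Fin d))‖ < r ∧
        ‖x (((z : Y).2 : Fin N × zlat b)).1 +
          (((((z : Y).2 : Fin N × zlat b)).2 + ((z : Y).1.2 : zlat b) : zlat b) :
            EuclideanSpace ℝ (Fin d))‖ < r := by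
      intro z
      obtain ⟨⟨⟨i, v⟩, q⟩, hz⟩ := z
      dsimp only at hz ⊢
      have hv : ‖((v : zlat b) : EuclideanSpace ℝ (Fin d))‖ < r - T - A := v.2
      have hQb := hQT i (q : Fin N × zlat b) q.2
      have hb1 : ‖x i + (((v : zlat b)) : EuclideanSpace ℝ (Fin d))‖ < r - T :=
        calc ‖x i + (((v : zlat b)) : EuclideanSpace ℝ (Fin d))‖
            ≤ ‖x i‖ + ‖((v : zlat b) : EuclideanSpace ℝ (Fin d))‖ := norm_add_le _ _
          _ < A + (r - T - A) := add_lt_add_of_le_of_lt (hA i) hv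
          _ = r - T := by ring
      refine ⟨?_, ?_, ?_⟩
      · intro hc
        rw [Prod.mk.injEq] at hc
        exact hz (Prod.ext hc.1.symm (by
          have := hc.2
          nth_rewrite 1 [show ((v : zlat b)) = 0 + ((v : zlat b)) by rw [zero_add]] at this
          exact (add_left_inj _).1 this.symm))
      · exact lt_of_lt_of_le hb1 (by linarith)
      · have : ((((q : Fin N × zlat b).2 + (v : zlat b) : zlat b)) :
            EuclideanSpace ℝ (Fin d)) = ((q : Fin N × zlat b).2 :
            EuclideanSpace ℝ (Fin d)) + ((v : zlat b) : EuclideanSpace ℝ (Fin d)) := rfl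
        rw [this]
        calc ‖x (q : Fin N × zlat b).1 + (((q : Fin N × zlat b).2 :
              EuclideanSpace ℝ (Fin d)) + ((v : zlat b) : EuclideanSpace ℝ (Fin d)))‖
            = ‖(x i + ((v : zlat b) : EuclideanSpace ℝ (Fin d))) -
                (x i - (x (q : Fin N × zlat b).1 + ((q : Fin N × zlat b).2 :
                  EuclideanSpace ℝ (Fin d))))‖ := by congr 1; abel
          _ ≤ ‖x i + ((v : zlat b) : EuclideanSpace ℝ (Fin d))‖ +
              ‖x i - (x (q : Fin N × zlat b).1 + ((q : Fin N × zlat b).2 :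
                EuclideanSpace ℝ (Fin d)))‖ := norm_sub_le _ _
          _ < (r - T) + T := add_lt_add hb1 hQb
          _ = r := by ring
    set ι3 : S → {q : (Fin N × zlat b) × (Fin N × zlat b) // q.1 ≠ q.2 ∧
        ‖x q.1.1 + (q.1.2 : EuclideanSpace ℝ (Fin d))‖ < r ∧
        ‖x q.2.1 + (q.2.2 : EuclideanSpace ℝ (Fin d))‖ < r} :=
      fun z => ⟨(((z : Y).1.1, ((z : Y).1.2 : zlat b)),
        ((((z : Y).2 : Fin N × zlat b)).1,
         (((z : Y).2 : Fin N × zlat b)).2 + ((z : Y).1.2 : zlat b))), hmap z⟩ with hι3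
    have hinj3 : Function.Injective ι3 := by
      intro z z' hzz
      rw [hι3] at hzz
      simp only [Subtype.mk.injEq, Prod.mk.injEq] at hzz
      obtain ⟨⟨e1, e2⟩, e3, e4⟩ := hzz
      have e2' : (z : Y).1.2 = (z' : Y).1.2 := Subtype.ext e2
      rw [e2] at e4
      have e4' : ((z : Y).2 : Fin N × zlat b) = ((z' : Y).2 : Fin N × zlat b) :=
        Prod.ext e3 ((add_left_inj _).1 e4)
      exact Subtype.ext (Prod.ext (Prod.ext e1 e2') (Subtype.ext e4'))
    have hval3 : ∀ z : S,
        (fun p : {q : (Fin N × zlat b) × (Fin N × zlat b) // q.1 ≠ q.2 ∧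
          ‖x q.1.1 + (q.1.2 : EuclideanSpace ℝ (Fin d))‖ < r ∧
          ‖x q.2.1 + (q.2.2 : EuclideanSpace ℝ (Fin d))‖ < r} =>
          f (‖(x (p : (Fin N × zlat b) × (Fin N × zlat b)).1.1 +
              ((p : (Fin N × zlat b) × (Fin N × zlat b)).1.2 : EuclideanSpace ℝ (Fin d))) -
            (x (p : (Fin N × zlat b) × (Fin N × zlat b)).2.1 +
              ((p : (Fin N × zlat b) × (Fin N × zlat b)).2.2 :
                EuclideanSpace ℝ (Fin d)))‖ ^ 2)) (ι3 z) =
        f (‖x (z : Y).1.1 - (x (((z : Y).2 : Fin N × zlat b)).1 +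
          ((((z : Y).2 : Fin N × zlat b)).2 : EuclideanSpace ℝ (Fin d)))‖ ^ 2) := by
      intro z
      rw [hι3]
      dsimp only
      congr 2
      rw [show ((((((z : Y).2 : Fin N × zlat b)).2 + ((z : Y).1.2 : zlat b) : zlat b)) :
        EuclideanSpace ℝ (Fin d)) = ((((z : Y).2 : Fin N × zlat b)).2 :
          EuclideanSpace ℝ (Fin d)) + (((z : Y).1.2 : zlat b) :
          EuclideanSpace ℝ (Fin d)) from rfl]
      abel
    -- now the computation of the S-sum
    have hfinCs : Finite Cs := sub_finite b (r - T - A)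
    letI : Fintype Cs := Fintype.ofFinite _
    have hcompute : (∑' z : S, f (‖x (z : Y).1.1 -
        (x (((z : Y).2 : Fin N × zlat b)).1 +
          ((((z : Y).2 : Fin N × zlat b)).2 : EuclideanSpace ℝ (Fin d)))‖ ^ 2)) =
        (zcnt b (r - T - A) : ℝ≥0∞) * (∑ i, ∑ q ∈ Q, if q = (i, 0) then 0
          else f (‖x i - (x q.1 + (q.2 : EuclideanSpace ℝ (Fin d)))‖ ^ 2)) := by
      calc (∑' z : S, f (‖x (z : Y).1.1 - (x (((z : Y).2 : Fin N × zlat b)).1 +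
            ((((z : Y).2 : Fin N × zlat b)).2 : EuclideanSpace ℝ (Fin d)))‖ ^ 2))
          = ∑' z : S, h2 (z : Y) := by
            refine tsum_congr fun z => ?_
            rw [hh2]
            dsimp only
            rw [if_neg z.2]
        _ = ∑' z : Y, Set.indicator S h2 z := tsum_subtype S h2
        _ = ∑' z : Y, h2 z := by
            refine tsum_congr fun z => ?_
            by_cases hz : z ∈ S
            · rw [Set.indicator_of_mem hz]
            · rw [Set.indicator_of_notMem hz, hh2]
              dsimp only
              rw [hS] at hz
              simp only [Set.mem_setOf_eq, not_not] at hz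
              rw [if_pos hz]
        _ = ∑' y : Fin N × Cs, ∑' q : {q : Fin N × zlat b // q ∈ Q}, h2 (y, q) :=
            ENNReal.tsum_prod (f := fun y q => h2 (y, q))
        _ = ∑' y : Fin N × Cs, ∑ q ∈ Q, (if q = (y.1, 0) then 0
            else f (‖x y.1 - (x q.1 + (q.2 : EuclideanSpace ℝ (Fin d)))‖ ^ 2)) := by
            refine tsum_congr fun y => ?_
            exact Finset.tsum_subtype Q (fun q => if q = (y.1, 0) then 0
              else f (‖x y.1 - (x q.1 + (q.2 : EuclideanSpace ℝ (Fin d)))‖ ^ 2))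
        _ = ∑' i : Fin N, ∑' v : Cs, ∑ q ∈ Q, (if q = (i, 0) then 0
            else f (‖x i - (x q.1 + (q.2 : EuclideanSpace ℝ (Fin d)))‖ ^ 2)) :=
            ENNReal.tsum_prod (f := fun i v => ∑ q ∈ Q, (if q = (i, 0) then 0
              else f (‖x i - (x q.1 + (q.2 : EuclideanSpace ℝ (Fin d)))‖ ^ 2)))
        _ = ∑ i : Fin N, (zcnt b (r - T - A) : ℝ≥0∞) * ∑ q ∈ Q, (if q = (i, 0) then 0
            else f (‖x i - (x q.1 + (q.2 : EuclideanSpace ℝ (Fin d)))‖ ^ 2)) := by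
            rw [tsum_fintype]
            refine Finset.sum_congr rfl fun i _ => ?_
            rw [tsum_fintype, Finset.sum_const, Finset.card_univ, nsmul_eq_mul]
            congr 1
            rw [zcnt, Nat.card_eq_fintype_card]
        _ = (zcnt b (r - T - A) : ℝ≥0∞) * (∑ i, ∑ q ∈ Q, if q = (i, 0) then 0
            else f (‖x i - (x q.1 + (q.2 : EuclideanSpace ℝ (Fin d)))‖ ^ 2)) := by
            rw [Finset.mul_sum]
    rw [← hcompute]
    refine le_trans (le_of_eq (tsum_congr fun z => (hval3 z).symm)) ?_
    exact ENNReal.tsum_comp_le_tsum_of_injective hinj3 _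
  have hlimsup : limsup (fun r : ℝ => E r / (card r : ℝ≥0∞)) atTop ≤ SG / N := by
    rcases eq_or_ne SG ⊤ with hSGt | hSGt
    · rw [hSGt, ENNReal.top_div_of_ne_top hNnt]; exact le_top
    · refine le_of_forall_gt_imp_ge_of_dense fun cc hcc => ?_
      have h1 : SG < cc * N :=
        (ENNReal.div_lt_iff (Or.inl hNn0) (Or.inl hNnt)).1 hcc
      obtain ⟨δ, hδ1, hδ2⟩ := ennreal_exists_mul_le h1
      have hev1 : ∀ᶠ r : ℝ in atTop, (zcnt b (r + A) : ℝ≥0∞) ≤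
          ENNReal.ofReal δ * (zcnt b (r - A) : ℝ≥0∞) := by
        have h := zcnt_growth b (2 * A) (by linarith) hδ1
        have hshift : Tendsto (fun r : ℝ => r + (-A)) atTop atTop :=
          tendsto_atTop_add_const_right atTop (-A) tendsto_id
        filter_upwards [hshift.eventually h] with r hr
        rw [show r + (-A) + 2 * A = r + A by ring, show r + (-A) = r - A by ring] at hr
        exact hr
      refine limsup_le_of_le (by isBoundedDefault) ?_
      filter_upwards [hev1] with r hr
      refine ENNReal.div_le_of_le_mul ?_
      calc E r ≤ (zcnt b (r + A) : ℝ≥0∞) * SG := hub r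
        _ ≤ (ENNReal.ofReal δ * (zcnt b (r - A) : ℝ≥0∞)) * SG := mul_le_mul_left hr _
        _ = (SG * ENNReal.ofReal δ) * (zcnt b (r - A) : ℝ≥0∞) := by ring
        _ ≤ (cc * N) * (zcnt b (r - A) : ℝ≥0∞) := mul_le_mul_left hδ2 _
        _ = cc * ((N * zcnt b (r - A) : ℕ) : ℝ≥0∞) := by push_cast; ring
        _ ≤ cc * (card r : ℝ≥0∞) :=
            mul_le_mul_right (by exact_mod_cast Nat.cast_le.2 (hclow r)) _
  have hliminf : SG / N ≤ liminf (fun r : ℝ => E r / (card r : ℝ≥0∞)) atTop := by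
    refine le_of_forall_lt_imp_le_of_dense fun a ha => ?_
    have h1 : a * N < SG := (ENNReal.lt_div_iff_mul_lt (Or.inl hNn0) (Or.inl hNnt)).1 ha
    have hswap : a * N < ⨆ Q : Finset (Fin N × zlat b), ∑ q ∈ Q, ∑ i : Fin N,
        (if q = (i, 0) then 0
          else f (‖x i - (x q.1 + (q.2 : EuclideanSpace ℝ (Fin d)))‖ ^ 2)) := by
      refine lt_of_lt_of_le h1 (le_of_eq ?_)
      rw [hSG]
      simp only [hG]
      rw [← ENNReal.tsum_eq_iSup_sum]
      exact (Summable.tsum_finsetSum (fun i _ => ENNReal.summable)).symm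
    obtain ⟨Q, hQ⟩ := lt_iSup_iff.1 hswap
    set HQ := ∑ i : Fin N, ∑ q ∈ Q, (if q = (i, 0) then 0
      else f (‖x i - (x q.1 + (q.2 : EuclideanSpace ℝ (Fin d)))‖ ^ 2)) with hHQ
    have hQ' : a * N < HQ := by rw [hHQ, Finset.sum_comm]; exact hQ
    obtain ⟨δ, hδ1, hδ2⟩ := ennreal_exists_mul_le hQ'
    set B := ∑ i : Fin N, ∑ q ∈ Q, ‖x i - (x q.1 + (q.2 : EuclideanSpace ℝ (Fin d)))‖
      with hB
    have hB0 : 0 ≤ B := Finset.sum_nonneg fun i _ =>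
      Finset.sum_nonneg fun q _ => norm_nonneg _
    have hT0 : 0 ≤ B + 1 := by linarith
    have hQT : ∀ i, ∀ q ∈ Q,
        ‖x i - (x q.1 + (q.2 : EuclideanSpace ℝ (Fin d)))‖ < B + 1 := by
      intro i q hq
      have h2 : ‖x i - (x q.1 + (q.2 : EuclideanSpace ℝ (Fin d)))‖ ≤
          ∑ q ∈ Q, ‖x i - (x q.1 + (q.2 : EuclideanSpace ℝ (Fin d)))‖ :=
        Finset.single_le_sum (f := fun q : Fin N × zlat b =>
          ‖x i - (x q.1 + (q.2 : EuclideanSpace ℝ (Fin d)))‖)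
          (fun q _ => norm_nonneg _) hq
      have h3 : (∑ q ∈ Q, ‖x i - (x q.1 + (q.2 : EuclideanSpace ℝ (Fin d)))‖) ≤ B :=
        Finset.single_le_sum (f := fun i => ∑ q ∈ Q,
          ‖x i - (x q.1 + (q.2 : EuclideanSpace ℝ (Fin d)))‖)
          (fun i _ => Finset.sum_nonneg fun q _ => norm_nonneg _) (Finset.mem_univ i)
      linarith
    have hev1 : ∀ᶠ r : ℝ in atTop, (zcnt b (r + A) : ℝ≥0∞) ≤
        ENNReal.ofReal δ * (zcnt b (r - (B + 1) - A) : ℝ≥0∞) := by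
      have h := zcnt_growth b ((B + 1) + 2 * A) (by linarith) hδ1
      have hshift : Tendsto (fun r : ℝ => r + (-((B + 1) + A))) atTop atTop :=
        tendsto_atTop_add_const_right atTop _ tendsto_id
      filter_upwards [hshift.eventually h] with r hr
      rw [show r + (-((B + 1) + A)) + ((B + 1) + 2 * A) = r + A by ring,
        show r + (-((B + 1) + A)) = r - (B + 1) - A by ring] at hr
      exact hr
    have hev2 : ∀ᶠ r : ℝ in atTop, 1 ≤ zcnt b (r - A) := by
      have hshift : Tendsto (fun r : ℝ => r + (-A)) atTop atTop :=
        tendsto_atTop_add_const_right atTop _ tendsto_id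
      filter_upwards [hshift.eventually (zcnt_pos b)] with r hr
      rw [show r + (-A) = r - A by ring] at hr
      exact hr
    refine le_liminf_of_le (by isBoundedDefault) ?_
    filter_upwards [hev1, hev2] with r hr1 hr2
    have hcard1 : 1 ≤ card r := by
      calc 1 ≤ N := hN
        _ ≤ N * zcnt b (r - A) := Nat.le_mul_of_pos_right N (by omega)
        _ ≤ card r := hclow r
    have hcard0 : (card r : ℝ≥0∞) ≠ 0 := by
      exact_mod_cast Nat.one_le_iff_ne_zero.1 hcard1
    rw [ENNReal.le_div_iff_mul_le (Or.inl hcard0) (Or.inl (ENNReal.natCast_ne_top _))]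
    calc a * (card r : ℝ≥0∞) ≤ a * ((N * zcnt b (r + A) : ℕ) : ℝ≥0∞) :=
          mul_le_mul_right (by exact_mod_cast Nat.cast_le.2 (hchigh r)) _
      _ = (a * N) * (zcnt b (r + A) : ℝ≥0∞) := by push_cast; ring
      _ ≤ (a * N) * (ENNReal.ofReal δ * (zcnt b (r - (B + 1) - A) : ℝ≥0∞)) :=
          mul_le_mul_right hr1 _
      _ = ((a * N) * ENNReal.ofReal δ) * (zcnt b (r - (B + 1) - A) : ℝ≥0∞) := by ring
      _ ≤ HQ * (zcnt b (r - (B + 1) - A) : ℝ≥0∞) := mul_le_mul_left hδ2 _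
      _ = (zcnt b (r - (B + 1) - A) : ℝ≥0∞) * HQ := mul_comm _ _
      _ ≤ E r := hlb Q (B + 1) hT0 hQT r
  exact tendsto_of_le_liminf_of_limsup_le hliminf hlimsup
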